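/- Let N ≥ 1 and n ≥ 0 be natural numbers and let p ∈ ℚ[X] be a polynomial with deg p < N(n+1), with coefficients b_i := coeff_i p. Let F ∈ ℚ⟦X⟧ satisfy (1 − X^N)^{n+1} · F = p. Then for all m ∈ ℕ and all j with 0 ≤ j ≤ N − 1, the coefficient of X^{mN+j} in F equals ∑_{h=0}^{n} b_{hN+j} · C(m − h + n, n), where by convention C(m − h + n, n) = 0 when m < h. (The coefficient formula established in the proof of Theorem 1.1 of the paper.) -/

import Mathlib

open PowerSeries Finset

private noncomputable def Gser (N n : ℕ) : PowerSeries ℚ :=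
  PowerSeries.mk fun k => if N ∣ k then ((k / N + n).choose n : ℚ) else 0

private lemma coeff_one_sub_Xpow_mul (N : ℕ) (f : PowerSeries ℚ) (k : ℕ) :
    PowerSeries.coeff k ((1 - PowerSeries.X ^ N) * f) =
      PowerSeries.coeff k f - (if N ≤ k then PowerSeries.coeff (k - N) f else 0) := by
  have h : (1 - PowerSeries.X ^ N) * f = f - f * PowerSeries.X ^ N := by ring
  rw [h, map_sub, PowerSeries.coeff_mul_X_pow']

private lemma Gser_identity (N : ℕ) (hN : 1 ≤ N) :
    ∀ n : ℕ, (1 - PowerSeries.X ^ N) ^ (n + 1) * Gser N n = 1 := by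
  have hN0 : 0 < N := hN
  intro n
  induction n with
  | zero =>
    rw [pow_one]
    ext k
    rw [coeff_one_sub_Xpow_mul]
    simp only [Gser, PowerSeries.coeff_mk, Nat.choose_zero_right, PowerSeries.coeff_one]
    by_cases hdk : N ∣ k
    · obtain ⟨c, rfl⟩ := hdk
      rcases c with _ | c
      · simp [hN0, (by omega : ¬ N ≤ N * 0)]
        omega
      · have h1 : N * (c + 1) = N * c + N := Nat.mul_succ N c
        have h2 : N ≤ N * (c + 1) := by omega
        have h3 : N * (c + 1) - N = N * c := by omega
        have h4 : N ∣ N * c := ⟨c, rfl⟩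
        have h5 : N * (c + 1) ≠ 0 := by omega
        simp [h2, h3, h4, h5, dvd_mul_right]
    · have hk0 : k ≠ 0 := by rintro rfl; exact hdk ⟨0, by omega⟩
      by_cases hle : N ≤ k
      · have hnd : ¬ N ∣ k - N := by
          intro ⟨c, hc⟩
          exact hdk ⟨c + 1, by rw [Nat.mul_succ]; omega⟩
        simp [hdk, hnd, hk0, hle]
      · simp [hdk, hk0, hle]
  | succ n ih =>
    have hstep : (1 - PowerSeries.X ^ N) * Gser N (n + 1) = Gser N n := by
      ext k
      rw [coeff_one_sub_Xpow_mul]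
      simp only [Gser, PowerSeries.coeff_mk]
      by_cases hdk : N ∣ k
      · obtain ⟨c, rfl⟩ := hdk
        rcases c with _ | c
        · have h0 : ¬ N ≤ N * 0 := by omega
          simp [h0, dvd_mul_right, Nat.mul_div_cancel_left _ hN0]
          omega
        · have h1 : N * (c + 1) = N * c + N := Nat.mul_succ N c
          have h2 : N ≤ N * (c + 1) := by omega
          have h3 : N * (c + 1) - N = N * c := by omega
          have h4 : N ∣ N * c := ⟨c, rfl⟩
          rw [if_pos h2, h3, if_pos h4, if_pos (dvd_mul_right N (c+1)), if_pos (dvd_mul_right N (c+1))]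
          rw [Nat.mul_div_cancel_left _ hN0, Nat.mul_div_cancel_left _ hN0]
          have key : (c + 1 + (n + 1)).choose (n + 1)
              = (c + n + 1).choose n + (c + n + 1).choose (n + 1) := by
            rw [show c + 1 + (n + 1) = (c + n + 1) + 1 by omega, Nat.choose_succ_succ']
          rw [key, show c + (n + 1) = c + n + 1 by omega, show c + 1 + n = c + n + 1 by omega]
          push_cast
          ring
      · by_cases hle : N ≤ k
        · have hnd : ¬ N ∣ k - N := by
            intro ⟨c, hc⟩
            exact hdk ⟨c + 1, by rw [Nat.mul_succ]; omega⟩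
          simp [hdk, hnd, hle]
        · simp [hdk, hle]
    calc (1 - PowerSeries.X ^ N) ^ (n + 1 + 1) * Gser N (n + 1)
        = (1 - PowerSeries.X ^ N) ^ (n + 1) * ((1 - PowerSeries.X ^ N) * Gser N (n + 1)) := by ring
      _ = (1 - PowerSeries.X ^ N) ^ (n + 1) * Gser N n := by rw [hstep]
      _ = 1 := ih

theorem coeff_formula (N n : ℕ) (hN : 1 ≤ N) (p : Polynomial ℚ)
    (hp : p.degree < (N * (n + 1) : ℕ)) (F : PowerSeries ℚ)
    (hF : (1 - PowerSeries.X ^ N) ^ (n + 1) * F = (p : PowerSeries ℚ))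
    (m j : ℕ) (hj : j < N) :
    PowerSeries.coeff (m * N + j) F =
      ∑ h ∈ Finset.range (n + 1),
        p.coeff (h * N + j) * (if h ≤ m then ((m - h + n).choose n : ℚ) else 0) := by
  classical
  have hN0 : 0 < N := hN
  set k := m * N + j with hk
  -- F = p * G
  have hGne : (1 - PowerSeries.X ^ N : PowerSeries ℚ) ^ (n + 1) ≠ 0 := by
    apply pow_ne_zero
    intro h
    have h2 := congrArg (PowerSeries.constantCoeff) h
    simp [zero_pow (by omega : N ≠ 0)] at h2
  have hFeq : F = (p : PowerSeries ℚ) * Gser N n := by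
    apply mul_left_cancel₀ hGne
    rw [hF, show (1 - PowerSeries.X ^ N) ^ (n + 1) * ((p : PowerSeries ℚ) * Gser N n)
        = (p : PowerSeries ℚ) * ((1 - PowerSeries.X ^ N) ^ (n + 1) * Gser N n) by ring,
      Gser_identity N hN n, mul_one]
  rw [hFeq, PowerSeries.coeff_mul, Finset.Nat.sum_antidiagonal_eq_sum_range_succ_mk]
  simp only [Gser, PowerSeries.coeff_mk, Polynomial.coeff_coe]
  -- abbreviate summand
  set f : ℕ → ℚ := fun a => p.coeff a *
    (if N ∣ k - a then (((k - a) / N + n).choose n : ℚ) else 0) with hf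
  show ∑ a ∈ Finset.range (k + 1), f a = _
  -- value of f at h*N+j for h ≤ m
  have hval : ∀ h ≤ m, f (h * N + j) = p.coeff (h * N + j) * ((m - h + n).choose n : ℚ) := by
    intro h hh
    have h1 : h * N ≤ m * N := Nat.mul_le_mul_right N hh
    have h2 : (m - h) * N = m * N - h * N := Nat.sub_mul m h N
    have hsub : k - (h * N + j) = (m - h) * N := by omega
    have hdvd : N ∣ (m - h) * N := ⟨m - h, mul_comm _ _⟩
    simp only [hf, hsub, if_pos hdvd, Nat.mul_div_cancel _ hN0]
  -- step 1: restrict to image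
  have himg : (Finset.range (m + 1)).image (fun h => h * N + j) ⊆ Finset.range (k + 1) := by
    intro a ha
    obtain ⟨h, hh, rfl⟩ := Finset.mem_image.mp ha
    have hh' : h ≤ m := by simpa using Nat.lt_succ_iff.mp (Finset.mem_range.mp hh)
    have := Nat.mul_le_mul_right N hh'
    exact Finset.mem_range.mpr (by omega)
  have hvan : ∀ a ∈ Finset.range (k + 1),
      a ∉ (Finset.range (m + 1)).image (fun h => h * N + j) → f a = 0 := by
    intro a ha hnot
    by_cases hdvd : N ∣ k - a
    · exfalso
      apply hnot
      obtain ⟨c, hc⟩ := hdvd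
      have hak : a ≤ k := by have := Finset.mem_range.mp ha; omega
      have hcomm : N * c = c * N := mul_comm _ _
      have hcm : c ≤ m := by
        by_contra hcm'
        push_neg at hcm'
        have h5 : (m + 1) * N ≤ c * N := Nat.mul_le_mul_right N hcm'
        have h6 : (m + 1) * N = m * N + N := by ring
        omega
      refine Finset.mem_image.mpr ⟨m - c, Finset.mem_range.mpr (by omega), ?_⟩
      have h4 : (m - c) * N = m * N - c * N := Nat.sub_mul m c N
      have h5 : c * N ≤ m * N := Nat.mul_le_mul_right N hcm
      omega
    · simp [hf, hdvd]
  have hinj : ∀ x ∈ Finset.range (m + 1), ∀ y ∈ Finset.range (m + 1),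
      x * N + j = y * N + j → x = y := by
    intro x _ y _ hxy
    exact Nat.eq_of_mul_eq_mul_right hN0 (by omega)
  set M := max m n with hM
  calc ∑ a ∈ Finset.range (k + 1), f a
      = ∑ a ∈ (Finset.range (m + 1)).image (fun h => h * N + j), f a :=
        (Finset.sum_subset himg hvan).symm
    _ = ∑ h ∈ Finset.range (m + 1), f (h * N + j) := Finset.sum_image hinj
    _ = ∑ h ∈ Finset.range (m + 1),
          p.coeff (h * N + j) * (if h ≤ m then ((m - h + n).choose n : ℚ) else 0) := by
        refine Finset.sum_congr rfl fun h hh => ?_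
        have hh' : h ≤ m := Nat.lt_succ_iff.mp (Finset.mem_range.mp hh)
        rw [hval h hh', if_pos hh']
    _ = ∑ h ∈ Finset.range (M + 1),
          p.coeff (h * N + j) * (if h ≤ m then ((m - h + n).choose n : ℚ) else 0) := by
        apply Finset.sum_subset
        · exact Finset.range_subset_range.mpr (by omega)
        · intro h _ hh
          have : ¬ h ≤ m := by
            intro hle
            exact hh (Finset.mem_range.mpr (by omega))
          simp [this]
    _ = ∑ h ∈ Finset.range (n + 1),
          p.coeff (h * N + j) * (if h ≤ m then ((m - h + n).choose n : ℚ) else 0) := by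
        symm
        apply Finset.sum_subset
        · exact Finset.range_subset_range.mpr (by omega)
        · intro h _ hh
          have hgt : n + 1 ≤ h := by
            by_contra hle
            exact hh (Finset.mem_range.mpr (by omega))
          have h1 : (n + 1) * N ≤ h * N := Nat.mul_le_mul_right N hgt
          have h2 : (n + 1) * N = N * (n + 1) := mul_comm _ _
          have hdeg : p.coeff (h * N + j) = 0 := by
            apply Polynomial.coeff_eq_zero_of_degree_lt
            exact lt_of_lt_of_le hp (by exact_mod_cast (by omega : N * (n + 1) ≤ h * N + j))
          simp [hdeg]
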